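/- Let A be a semistandard Young tableau of shape λ with entries in {1,…,m} and ℓ(λ') ≤ p, let D_λ be the tableau of shape λ with D_λ(k,l) = l, and let C ∈ 𝕋_A be an A-restricted tableau. If θ_{AC} ⊗ e_C = ε · θ_{A D_λ} ⊗ e_{D_λ} for some sign ε ∈ {+1, -1}, then C = D_λ. -/

import Mathlib

open scoped TensorProduct
open scoped Classical

noncomputable section

abbrev Lam (m p : ℕ) : Type := ExteriorAlgebra ℂ (Fin m × Fin p → ℂ)

def Qcl (p : ℕ) : QuadraticForm ℂ (Fin p → ℂ) :=
  QuadraticMap.weightedSumSquares ℂ (fun _ : Fin p => (1 : ℂ))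

abbrev Cl (p : ℕ) : Type := CliffordAlgebra (Qcl p)

abbrev Bsp (m p : ℕ) : Type := Lam m p ⊗[ℂ] Cl p

def θv (m p : ℕ) (i : Fin m) (α : Fin p) : Lam m p :=
  ExteriorAlgebra.ι ℂ (Pi.single (i, α) 1)

def ev (p : ℕ) (α : Fin p) : Cl p :=
  CliffordAlgebra.ι (Qcl p) (Pi.single α 1)

def gDer (m p : ℕ) (i : Fin m) (α : Fin p) : Lam m p →ₗ[ℂ] Lam m p :=
  CliffordAlgebra.contractLeft (Q := (0 : QuadraticForm ℂ (Fin m × Fin p → ℂ)))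
    (LinearMap.proj (i, α))

def ThetaOp (m p : ℕ) (i : Fin m) : Module.End ℂ (Bsp m p) :=
  ∑ α : Fin p,
    TensorProduct.map (LinearMap.mulLeft ℂ (θv m p i α)) (LinearMap.mulLeft ℂ (ev p α))

def DOp (m p : ℕ) (i : Fin m) : Module.End ℂ (Bsp m p) :=
  ∑ α : Fin p,
    TensorProduct.map (gDer m p i α) (LinearMap.mulLeft ℂ (ev p α))

def hOp (m p : ℕ) (i : Fin m) : Module.End ℂ (Bsp m p) :=
  (-(1/2 : ℂ)) • ⁅DOp m p i, ThetaOp m p i⁆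

def oneB (m p : ℕ) : Bsp m p := (1 : Lam m p) ⊗ₜ[ℂ] (1 : Cl p)

def Pmod (m p : ℕ) : Submodule ℂ (Bsp m p) :=
  Submodule.span ℂ {v | ∃ l : List (Fin m), v = ((l.map (ThetaOp m p)).prod) (oneB m p)}

def thetaMon (m p : ℕ) (γ : Matrix (Fin m) (Fin p) (ZMod 2)) : Lam m p :=
  ((List.finRange p).map (fun α =>
    ((List.finRange m).map (fun i => if γ i α = 0 then 1 else θv m p i α)).prod)).prod

def eMon (p : ℕ) (η : Fin p → ZMod 2) : Cl p :=
  ((List.finRange p).map (fun α => if η α = 0 then 1 else ev p α)).prod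

/-! ### Young tableaux -/

/-- The number of rows `ℓ(λ)` of a Young diagram (the length of its first column). -/
def nRows (Y : YoungDiagram) : ℕ := Y.colLen 0

/-- `A : ℕ → ℕ → ℕ` is a semistandard filling of the Young diagram `Y` (with 0-based
entries): entries weakly increase along rows and strictly increase down columns. -/
def IsSSYT (Y : YoungDiagram) (A : ℕ → ℕ → ℕ) : Prop :=
  (∀ k l l', (k, l') ∈ Y → l ≤ l' → A k l ≤ A k l') ∧
  (∀ k k' l, (k', l) ∈ Y → k < k' → A k l < A k' l)

/-- All entries of the filling `A` of `Y` lie in `{0, …, m-1}` (representing `{1, …, m}`). -/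
def EntriesBelow (Y : YoungDiagram) (A : ℕ → ℕ → ℕ) (m : ℕ) : Prop :=
  ∀ c ∈ Y.cells, A c.1 c.2 < m

/-- The filling `C` of `Y` is row distinct: entries within each row are pairwise distinct. -/
def RowDistinct (Y : YoungDiagram) (C : ℕ → ℕ → ℕ) : Prop :=
  ∀ k l l', (k, l) ∈ Y → (k, l') ∈ Y → l ≠ l' → C k l ≠ C k l'

/-- `C` is an `A`-restricted tableau (entries of `C` in `{0,…,p-1}`). -/
def IsARestricted (p : ℕ) (Y : YoungDiagram) (A C : ℕ → ℕ → ℕ) : Prop :=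
  RowDistinct Y C ∧ EntriesBelow Y C p ∧
  (∀ k l k' l', (k, l) ∈ Y → (k', l') ∈ Y → (k, l) ≠ (k', l') →
      A k l = A k' l' → C k l ≠ C k' l') ∧
  (∀ k l l', (k, l') ∈ Y → l < l' → A k l = A k l' → C k l < C k l')

/-- `θ_{iα}` with natural-number indices (junk value `0` out of range). -/
def thetaN (m p : ℕ) (i α : ℕ) : Lam m p :=
  if h : i < m ∧ α < p then θv m p ⟨i, h.1⟩ ⟨α, h.2⟩ else 0

/-- `e_α` with a natural-number index (junk value `0` out of range). -/
def eNat (p : ℕ) (α : ℕ) : Cl p := if h : α < p then ev p ⟨α, h⟩ else 0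

/-- `Θ_i` with a natural-number index (junk value `0` out of range). -/
def ThetaN (m p : ℕ) (i : ℕ) : Module.End ℂ (Bsp m p) :=
  if h : i < m then ThetaOp m p ⟨i, h⟩ else 0

/-- The monomial `θ_{AC} = Π→_k θ_{A(k,1),C(k,1)} ⋯ θ_{A(k,λ_k),C(k,λ_k)} ∈ Λ`,
the product being taken row by row from the first row to the last. -/
def thetaTab (m p : ℕ) (Y : YoungDiagram) (A C : ℕ → ℕ → ℕ) : Lam m p :=
  ((List.range (nRows Y)).map (fun k =>
    ((List.range (Y.rowLen k)).map (fun l => thetaN m p (A k l) (C k l))).prod)).prod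

/-- The monomial `e_C = Π→_k e_{C(k,1)} ⋯ e_{C(k,λ_k)} ∈ Cℓ_p`. -/
def eTab (p : ℕ) (Y : YoungDiagram) (C : ℕ → ℕ → ℕ) : Cl p :=
  ((List.range (nRows Y)).map (fun k =>
    ((List.range (Y.rowLen k)).map (fun l => eNat p (C k l))).prod)).prod

/-- The operator `Θ_A = (Θ_{A(1,1)}⋯Θ_{A(1,λ₁)}) ⋯ (Θ_{A(ℓ,1)}⋯Θ_{A(ℓ,λ_ℓ)})`. -/
def ThetaTab (m p : ℕ) (Y : YoungDiagram) (A : ℕ → ℕ → ℕ) : Module.End ℂ (Bsp m p) :=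
  ((List.range (nRows Y)).map (fun k =>
    ((List.range (Y.rowLen k)).map (fun l => ThetaN m p (A k l))).prod)).prod

/-- The Young subgroup `S_λ = S_{λ₁} × ⋯ × S_{λ_ℓ}` of row permutations of `Y`. -/
abbrev YoungPerm (Y : YoungDiagram) : Type :=
  ∀ k : Fin (nRows Y), Equiv.Perm (Fin (Y.rowLen k))

/-- The row-permuted tableau `A^τ(k,l) = A(k, τ_k(l))`. -/
def permuteTab (Y : YoungDiagram) (A : ℕ → ℕ → ℕ) (τ : YoungPerm Y) : ℕ → ℕ → ℕ :=
  fun k l =>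
    if h : k < nRows Y ∧ l < Y.rowLen k then A k ((τ ⟨k, h.1⟩) ⟨l, h.2⟩ : ℕ) else A k l

/-- The number of entries equal to `i` in row `k` of the filling `A` of `Y`. -/
def rowCount (Y : YoungDiagram) (A : ℕ → ℕ → ℕ) (i k : ℕ) : ℕ :=
  ((List.range (Y.rowLen k)).filter (fun l => A k l = i)).length

/-- The factorial `A! = λ₁!⋯λ_ℓ! · Π_i Π_k (#{i's in row k of A})!`. -/
def tabFactorial (m : ℕ) (Y : YoungDiagram) (A : ℕ → ℕ → ℕ) : ℕ :=
  (∏ k ∈ Finset.range (nRows Y), (Y.rowLen k).factorial) *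
  ∏ i ∈ Finset.range m, ∏ k ∈ Finset.range (nRows Y), (rowCount Y A i k).factorial

/-- The vector `ω_A = (1/A!) Σ_{τ ∈ S_λ} Θ_{A^τ}(1 ⊗ 1) ∈ B`. -/
def omegaA (m p : ℕ) (Y : YoungDiagram) (A : ℕ → ℕ → ℕ) : Bsp m p :=
  ((tabFactorial m Y A : ℂ))⁻¹ •
    ∑ τ : YoungPerm Y, (ThetaTab m p Y (permuteTab Y A τ)) (oneB m p)

/-- The symmetrized operator `Σ_{τ ∈ S_λ} Θ_{A^τ}`. -/
def symThetaTab (m p : ℕ) (Y : YoungDiagram) (A : ℕ → ℕ → ℕ) : Module.End ℂ (Bsp m p) :=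
  ∑ τ : YoungPerm Y, ThetaTab m p Y (permuteTab Y A τ)

/-- The number of entries equal to `i` in column `α` of the filling `A` of `Y`. -/
def colCount (Y : YoungDiagram) (A : ℕ → ℕ → ℕ) (i α : ℕ) : ℕ :=
  ((List.range (Y.colLen α)).filter (fun k => A k α = i)).length

/-- The matrix `γ_A ∈ M_{m×p}(ℤ₂)`: `(γ_A)_{iα} = #{i's in column α of A} (mod 2)`. -/
def gammaA (m p : ℕ) (Y : YoungDiagram) (A : ℕ → ℕ → ℕ) : Matrix (Fin m) (Fin p) (ZMod 2) :=
  Matrix.of fun i α => ((colCount Y A (i : ℕ) (α : ℕ) : ℕ) : ZMod 2)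

/-- The conjugate partition `λ'` of the shape of `Y`, read mod 2, as an element of `ℤ₂^p`. -/
def etaConj (p : ℕ) (Y : YoungDiagram) : Fin p → ZMod 2 :=
  fun α => ((Y.colLen (α : ℕ) : ℕ) : ZMod 2)

/-- The column sums `η_γ ∈ ℤ₂^p` of `γ ∈ M_{m×p}(ℤ₂)`. -/
def etaGamma (m p : ℕ) (γ : Matrix (Fin m) (Fin p) (ZMod 2)) : Fin p → ZMod 2 :=
  fun α => ∑ i : Fin m, γ i α

/-- Extension of a filling of the cells of `Y` by values in `{0,…,p-1}` to a total
function (with irrelevant junk value `p` outside the cells of `Y`). -/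
def cExt (p : ℕ) (Y : YoungDiagram) (C : ↥Y.cells → Fin p) : ℕ → ℕ → ℕ :=
  fun k l => if h : (k, l) ∈ Y.cells then (C ⟨(k, l), h⟩ : ℕ) else p

/-- The weight `μ_A`: `tabWeight Y A i` is the number of entries of `A` equal to `i`. -/
def tabWeight (Y : YoungDiagram) (A : ℕ → ℕ → ℕ) (i : ℕ) : ℕ :=
  (Y.cells.filter (fun c => A c.1 c.2 = i)).card

/-- Graded lexicographic order on weights in `ℕ^m`. -/
def WeightGLexLt (m : ℕ) (μ η : ℕ → ℕ) : Prop :=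
  (∑ i ∈ Finset.range m, μ i) < (∑ i ∈ Finset.range m, η i) ∨
  ((∑ i ∈ Finset.range m, μ i) = (∑ i ∈ Finset.range m, η i) ∧
    ∃ j < m, μ j < η j ∧ ∀ t < j, μ t = η t)

/-- The length of row `r` of the shape of the subtableau `A^k` (cells of `Y` whose
`A`-entry is `< k`, i.e. among the first `k` letters in 0-based labelling). -/
def subRowLen (Y : YoungDiagram) (A : ℕ → ℕ → ℕ) (k r : ℕ) : ℕ :=
  ((List.range (Y.rowLen r)).filter (fun l => A r l < k)).length

/-- Graded lexicographic comparison of the shapes of the subtableaux `A^k` and `B^k`. -/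
def SubShapeGLexLt (Y : YoungDiagram) (A : ℕ → ℕ → ℕ) (Z : YoungDiagram)
    (B : ℕ → ℕ → ℕ) (k : ℕ) : Prop :=
  (Y.cells.filter (fun c => A c.1 c.2 < k)).card
      < (Z.cells.filter (fun c => B c.1 c.2 < k)).card ∨
  ((Y.cells.filter (fun c => A c.1 c.2 < k)).card
      = (Z.cells.filter (fun c => B c.1 c.2 < k)).card ∧
    ∃ j, subRowLen Y A k j < subRowLen Z B k j ∧
      ∀ t < j, subRowLen Y A k t = subRowLen Z B k t)

/-- The total order on semistandard Young tableaux: `A < B` iff `μ_A < μ_B` in graded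
lex order, or `μ_A = μ_B` and there is `k ∈ {1,…,m}` with `shape(A^l) = shape(B^l)` for
all `l < k` and `shape(A^k) < shape(B^k)` in graded lex order. -/
def TabLt (m : ℕ) (Y : YoungDiagram) (A : ℕ → ℕ → ℕ) (Z : YoungDiagram)
    (B : ℕ → ℕ → ℕ) : Prop :=
  WeightGLexLt m (tabWeight Y A) (tabWeight Z B) ∨
  ((∀ i < m, tabWeight Y A i = tabWeight Z B i) ∧
    ∃ k, 1 ≤ k ∧ k ≤ m ∧ (∀ l < k, ∀ r, subRowLen Y A l r = subRowLen Z B l r) ∧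
      SubShapeGLexLt Y A Z B k)

/-- The index set for the basis of `P`: semistandard Young tableaux with entries in
`{0,…,m-1}` (normalized to `0` outside the diagram) whose shape has at most `p` columns. -/
def SSYTIdx (m p : ℕ) : Type :=
  {T : YoungDiagram × (ℕ → ℕ → ℕ) //
    IsSSYT T.1 T.2 ∧ EntriesBelow T.1 T.2 m ∧ T.1.rowLen 0 ≤ p ∧
      ∀ k l, (k, l) ∉ T.1 → T.2 k l = 0}

/-! ### Auxiliary machinery for Statement 18 -/

section Aux18

variable (m p : ℕ)

/-- `gDer` with natural-number indices (junk value `0` out of range). -/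
def gDerN (q : ℕ × ℕ) : Lam m p →ₗ[ℂ] Lam m p :=
  if h : q.1 < m ∧ q.2 < p then gDer m p ⟨q.1, h.1⟩ ⟨q.2, h.2⟩ else 0

/-- Monomial attached to a list of (ℕ-indexed) pairs. -/
def monN (L : List (ℕ × ℕ)) : Lam m p := (L.map fun q => thetaN m p q.1 q.2).prod

/-- Iterated contraction along a list of pairs (head applied first). -/
def conN : List (ℕ × ℕ) → (Lam m p →ₗ[ℂ] Lam m p)
  | [] => LinearMap.id
  | q :: t => conN t ∘ₗ gDerN m p q

lemma gDerN_theta_mul {q r : ℕ × ℕ} (hq : q.1 < m ∧ q.2 < p) (hr : r.1 < m ∧ r.2 < p)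
    (x : Lam m p) :
    gDerN m p q (thetaN m p r.1 r.2 * x)
      = (if q = r then x else 0) - thetaN m p r.1 r.2 * gDerN m p q x := by
  unfold gDerN thetaN
  rw [dif_pos hq, dif_pos hr]
  unfold gDer θv
  rw [CliffordAlgebra.contractLeft_ι_mul]
  congr 1
  rw [LinearMap.proj_apply, Pi.single_apply]
  have hcond : ((((⟨q.1, hq.1⟩ : Fin m), (⟨q.2, hq.2⟩ : Fin p)) : Fin m × Fin p)
      = ((⟨r.1, hr.1⟩ : Fin m), (⟨r.2, hr.2⟩ : Fin p))) = (q = r) := by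
    apply propext
    constructor
    · intro h
      exact Prod.ext (congrArg Fin.val (congrArg Prod.fst h))
        (congrArg Fin.val (congrArg Prod.snd h))
    · rintro rfl
      rfl
  simp only [hcond]
  split_ifs
  · exact one_smul _ _
  · exact zero_smul _ _

lemma gDerN_one (q : ℕ × ℕ) : gDerN m p q (1 : Lam m p) = 0 := by
  unfold gDerN
  by_cases h : q.1 < m ∧ q.2 < p
  · rw [dif_pos h]
    unfold gDer
    exact CliffordAlgebra.contractLeft_one _ _
  · rw [dif_neg h]
    rfl

lemma gDerN_monN_eq_zero {q : ℕ × ℕ} (L : List (ℕ × ℕ))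
    (hL : ∀ r ∈ L, r.1 < m ∧ r.2 < p) (hq : q ∉ L) :
    gDerN m p q (monN m p L) = 0 := by
  by_cases hqr : q.1 < m ∧ q.2 < p
  · induction L with
    | nil => simpa [monN] using gDerN_one m p q
    | cons r t ih =>
      have hmr : r.1 < m ∧ r.2 < p := hL r (List.mem_cons_self)
      have hstep : monN m p (r :: t) = thetaN m p r.1 r.2 * monN m p t := by
        simp [monN]
      rw [hstep, gDerN_theta_mul m p hqr hmr]
      rw [if_neg (fun h : q = r => hq (by rw [h]; exact List.mem_cons_self))]
      rw [ih (fun s hs => hL s (List.mem_cons_of_mem _ hs))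
        (fun h => hq (List.mem_cons_of_mem _ h))]
      simp
  · unfold gDerN
    rw [dif_neg hqr]
    rfl

lemma conN_monN_self (L : List (ℕ × ℕ)) (hL : ∀ r ∈ L, r.1 < m ∧ r.2 < p)
    (hnd : L.Nodup) : conN m p L (monN m p L) = 1 := by
  induction L with
  | nil => simp [conN, monN]
  | cons q t ih =>
    have hq : q.1 < m ∧ q.2 < p := hL q (List.mem_cons_self)
    have hqt : q ∉ t := (List.nodup_cons.mp hnd).1
    have hstep : monN m p (q :: t) = thetaN m p q.1 q.2 * monN m p t := by
      simp [monN]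
    have hLt : ∀ r ∈ t, r.1 < m ∧ r.2 < p := fun s hs => hL s (List.mem_cons_of_mem _ hs)
    simp only [conN, LinearMap.comp_apply]
    rw [hstep, gDerN_theta_mul m p hq hq, if_pos rfl,
      gDerN_monN_eq_zero m p t hLt hqt, mul_zero, sub_zero]
    exact ih hLt (List.nodup_cons.mp hnd).2

lemma conN_eq_zero (L : List (ℕ × ℕ)) (hL : ∀ r ∈ L, r.1 < m ∧ r.2 < p)
    {q : ℕ × ℕ} (hqL : q ∈ L) (x : Lam m p) (hx : gDerN m p q x = 0) :
    conN m p L x = 0 := by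
  induction L generalizing x with
  | nil => cases hqL
  | cons r t ih =>
    simp only [conN, LinearMap.comp_apply]
    rcases List.mem_cons.mp hqL with h | h
    · subst h
      rw [hx, map_zero]
    · refine ih (fun s hs => hL s (List.mem_cons_of_mem _ hs)) h _ ?_
      have hq : q.1 < m ∧ q.2 < p := hL q (List.mem_cons_of_mem _ h)
      unfold gDerN at hx ⊢
      by_cases hr : r.1 < m ∧ r.2 < p
      · rw [dif_pos hq] at hx ⊢
        rw [dif_pos hr]
        unfold gDer at hx ⊢
        rw [CliffordAlgebra.contractLeft_comm, hx, map_zero, neg_zero]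
      · rw [dif_neg hr]
        simp

lemma conN_monN_ne (L L' : List (ℕ × ℕ)) (hL : ∀ r ∈ L, r.1 < m ∧ r.2 < p)
    (hL' : ∀ r ∈ L', r.1 < m ∧ r.2 < p)
    {q : ℕ × ℕ} (hqL : q ∈ L) (hqL' : q ∉ L') :
    conN m p L (monN m p L') = 0 :=
  conN_eq_zero m p L hL hqL _ (gDerN_monN_eq_zero m p L' hL' hqL')

/-- The list of pairs `(A(k,l), G(k,l))` read row by row. -/
def rowList (Y : YoungDiagram) (A G : ℕ → ℕ → ℕ) : List (ℕ × ℕ) :=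
  ((List.range (nRows Y)).map (fun k =>
    (List.range (Y.rowLen k)).map (fun l => (A k l, G k l)))).flatten

lemma thetaTab_eq_monN (Y : YoungDiagram) (A G : ℕ → ℕ → ℕ) :
    thetaTab m p Y A G = monN m p (rowList Y A G) := by
  unfold thetaTab monN rowList
  rw [List.map_flatten, List.prod_flatten, List.map_map, List.map_map]
  refine congrArg List.prod (List.map_congr_left fun k _ => ?_)
  simp only [Function.comp_apply, List.map_map]
  rfl

lemma mem_rowList {Y : YoungDiagram} {A G : ℕ → ℕ → ℕ} {q : ℕ × ℕ} :
    q ∈ rowList Y A G ↔ ∃ k l, (k, l) ∈ Y ∧ q = (A k l, G k l) := by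
  unfold rowList
  simp only [List.mem_flatten, List.mem_map, List.mem_range]
  constructor
  · rintro ⟨s, ⟨k, hk, rfl⟩, hq⟩
    obtain ⟨l, hl, rfl⟩ := List.mem_map.mp hq
    exact ⟨k, l, YoungDiagram.mem_iff_lt_rowLen.mpr (List.mem_range.mp hl), rfl⟩
  · rintro ⟨k, l, hmem, rfl⟩
    refine ⟨_, ⟨k, ?_, rfl⟩, List.mem_map.mpr
      ⟨l, List.mem_range.mpr (YoungDiagram.mem_iff_lt_rowLen.mp hmem), rfl⟩⟩
    have h0 : (k, 0) ∈ Y := Y.up_left_mem le_rfl (Nat.zero_le _) hmem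
    exact YoungDiagram.mem_iff_lt_colLen.mp h0

lemma nodup_rowList (Y : YoungDiagram) (A G : ℕ → ℕ → ℕ)
    (hinj : ∀ k l k' l', (k, l) ∈ Y → (k', l') ∈ Y → (k, l) ≠ (k', l') →
      (A k l, G k l) ≠ (A k' l', G k' l')) :
    (rowList Y A G).Nodup := by
  unfold rowList
  rw [List.nodup_flatten]
  constructor
  · intro s hs
    obtain ⟨k, hk, rfl⟩ := List.mem_map.mp hs
    refine List.Nodup.map_on ?_ (List.nodup_range)
    intro l hl l' hl' hEq
    by_contra hne
    have h1 : (k, l) ∈ Y := YoungDiagram.mem_iff_lt_rowLen.mpr (List.mem_range.mp hl)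
    have h2 : (k, l') ∈ Y := YoungDiagram.mem_iff_lt_rowLen.mpr (List.mem_range.mp hl')
    exact hinj k l k l' h1 h2 (fun h => hne (congrArg Prod.snd h)) hEq
  · rw [List.pairwise_map]
    refine List.Pairwise.imp ?_ (List.nodup_range)
    intro k k' hkk' q hq hq'
    obtain ⟨l, hl, rfl⟩ := List.mem_map.mp hq
    obtain ⟨l', hl', hEq⟩ := List.mem_map.mp hq'
    have h1 : (k, l) ∈ Y := YoungDiagram.mem_iff_lt_rowLen.mpr (List.mem_range.mp hl)
    have h2 : (k', l') ∈ Y := YoungDiagram.mem_iff_lt_rowLen.mpr (List.mem_range.mp hl')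
    exact hinj k' l' k l h2 h1
      (fun h => hkk' (congrArg Prod.fst h).symm) hEq

lemma eNat_sq {α : ℕ} (hα : α < p) : eNat p α * eNat p α = 1 := by
  unfold eNat
  rw [dif_pos hα]
  unfold ev
  rw [CliffordAlgebra.ι_sq_scalar]
  have : Qcl p (Pi.single (⟨α, hα⟩ : Fin p) (1 : ℂ)) = 1 := by
    rw [Qcl, QuadraticMap.weightedSumSquares_apply]
    simp [Pi.single_apply]
  rw [this, map_one]

lemma isUnit_eTab (Y : YoungDiagram) (C : ℕ → ℕ → ℕ)
    (hCp : ∀ k l, (k, l) ∈ Y → C k l < p) :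
    IsUnit (eTab p Y C) := by
  unfold eTab
  refine List.prod_isUnit ?_
  intro s hs
  obtain ⟨k, hk, rfl⟩ := List.mem_map.mp hs
  refine List.prod_isUnit ?_
  intro a ha
  obtain ⟨l, hl, rfl⟩ := List.mem_map.mp ha
  have hmem : (k, l) ∈ Y := YoungDiagram.mem_iff_lt_rowLen.mpr (List.mem_range.mp hl)
  exact ⟨⟨eNat p (C k l), eNat p (C k l), eNat_sq p (hCp k l hmem),
    eNat_sq p (hCp k l hmem)⟩, rfl⟩

/-- The final combinatorial argument. -/
lemma combinatorial_step (Y : YoungDiagram) (A C : ℕ → ℕ → ℕ)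
    (hA : IsSSYT Y A) (hC : IsARestricted p Y A C)
    (h2 : ∀ k l, (k, l) ∈ Y → ∃ k' l', (k', l') ∈ Y ∧ A k' l' = A k l ∧ C k' l' = l) :
    ∀ k l, (k, l) ∈ Y → C k l = l := by
  by_contra hcon
  push_neg at hcon
  obtain ⟨k₀, l₀, hmem₀, hne₀⟩ := hcon
  set S : Finset (ℕ × ℕ) := Y.cells.filter (fun c => C c.1 c.2 ≠ c.2) with hS
  have hSne : S.Nonempty := ⟨(k₀, l₀), Finset.mem_filter.mpr
    ⟨(YoungDiagram.mem_cells _).mpr hmem₀, hne₀⟩⟩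
  obtain ⟨c, hcS, hmin⟩ := S.exists_min_image (fun c => A c.1 c.2 * p + C c.1 c.2) hSne
  obtain ⟨k, l⟩ := c
  have hcY : (k, l) ∈ Y := (YoungDiagram.mem_cells _).mp (Finset.mem_filter.mp hcS).1
  have hcC : C k l ≠ l := (Finset.mem_filter.mp hcS).2
  have hCp : C k l < p := hC.2.1 (k, l) ((YoungDiagram.mem_cells _).mpr hcY)
  rcases lt_or_gt_of_ne hcC with hv | hv
  · -- C k l < l
    have hmemv : (k, C k l) ∈ Y := Y.up_left_mem le_rfl (le_of_lt hv) hcY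
    have hAle : A k (C k l) ≤ A k l := hA.1 k (C k l) l hcY (le_of_lt hv)
    rcases eq_or_lt_of_le hAle with hAeq | hAlt
    · -- same value: condition 4 forces C k (C k l) < C k l
      have h4 := hC.2.2.2 k (C k l) l hcY hv hAeq
      have hmemS : (k, C k l) ∈ S := Finset.mem_filter.mpr
        ⟨(YoungDiagram.mem_cells _).mpr hmemv, by simp only; omega⟩
      have h8 := hmin _ hmemS
      simp only at h8
      rw [hAeq] at h8
      have h9 := le_of_add_le_add_left h8
      omega
    · -- smaller value: row distinctness
      have hne : C k (C k l) ≠ C k l := hC.1 k (C k l) l hmemv hcY (by omega)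
      have hmemS : (k, C k l) ∈ S := Finset.mem_filter.mpr
        ⟨(YoungDiagram.mem_cells _).mpr hmemv, by simp only; omega⟩
      have h8 := hmin _ hmemS
      simp only at h8
      have hCvp : C k (C k l) < p := hC.2.1 (k, C k l) ((YoungDiagram.mem_cells _).mpr hmemv)
      have h6 : A k (C k l) * p + p ≤ A k l * p := by
        calc A k (C k l) * p + p = (A k (C k l) + 1) * p := by ring
        _ ≤ A k l * p := Nat.mul_le_mul_right p hAlt
      have h7 : A k (C k l) * p + C k (C k l) < A k (C k l) * p + p :=
        Nat.add_lt_add_left hCvp _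
      have h10 : A k l * p + C k l < A k l * p + C k l :=
        lt_of_le_of_lt h8 (lt_of_lt_of_le h7 (le_trans h6 (Nat.le_add_right _ _)))
      exact absurd h10 (lt_irrefl _)
  · -- C k l > l : use surjectivity h2
    obtain ⟨k', l', hmem', hAeq, hCeq⟩ := h2 k l hcY
    have hne' : (k', l') ≠ (k, l) := by
      intro h
      injection h with hk1 hk2
      subst hk1
      subst hk2
      omega
    have hmemS : (k', l') ∈ S := by
      refine Finset.mem_filter.mpr ⟨(YoungDiagram.mem_cells _).mpr hmem', ?_⟩
      intro hdiag
      -- then l' = l, two cells in the same column with the same A-value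
      have hl' : l' = l := by rw [hCeq] at hdiag; omega
      subst hl'
      have hkk' : k' ≠ k := fun h => hne' (by rw [h])
      rcases lt_or_gt_of_ne hkk' with h | h
      · have := hA.2 k' k l' hcY h
        omega
      · have := hA.2 k k' l' hmem' h
        omega
    have h8 := hmin _ hmemS
    simp only at h8
    rw [hAeq, hCeq] at h8
    have h9 := le_of_add_le_add_left h8
    omega

end Aux18

/-- If `C ∈ 𝕋_A` satisfies `θ_{AC} ⊗ e_C = ± θ_{A D_λ} ⊗ e_{D_λ}`,
then `C = D_λ` (on the cells of `λ`), where `D_λ(k,l) = l`. -/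
theorem A_restricted_leading_unique (m p : ℕ) (hm : 0 < m) (hp : 0 < p)
    (Y : YoungDiagram) (A : ℕ → ℕ → ℕ)
    (hA : IsSSYT Y A) (hAm : EntriesBelow Y A m) (hcol : Y.rowLen 0 ≤ p)
    (C : ℕ → ℕ → ℕ) (hC : IsARestricted p Y A C)
    (ε : ℂ) (hε : ε = 1 ∨ ε = -1)
    (heq : thetaTab m p Y A C ⊗ₜ[ℂ] eTab p Y C
        = ε • (thetaTab m p Y A (fun _ l => l) ⊗ₜ[ℂ] eTab p Y (fun _ l => l))) :
    ∀ k l, (k, l) ∈ Y → C k l = l := by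
  haveI : Invertible (2 : ℂ) := invertibleOfNonzero two_ne_zero
  -- range conditions for the two lists of pairs
  have hLC : ∀ r ∈ rowList Y A C, r.1 < m ∧ r.2 < p := by
    intro r hr
    obtain ⟨k, l, hmem, rfl⟩ := mem_rowList.mp hr
    exact ⟨hAm (k, l) ((YoungDiagram.mem_cells _).mpr hmem),
      hC.2.1 (k, l) ((YoungDiagram.mem_cells _).mpr hmem)⟩
  have hLD : ∀ r ∈ rowList Y A (fun _ l => l), r.1 < m ∧ r.2 < p := by
    intro r hr
    obtain ⟨k, l, hmem, rfl⟩ := mem_rowList.mp hr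
    refine ⟨hAm (k, l) ((YoungDiagram.mem_cells _).mpr hmem), ?_⟩
    have h1 : l < Y.rowLen k := YoungDiagram.mem_iff_lt_rowLen.mp hmem
    exact lt_of_lt_of_le h1 (le_trans (Y.rowLen_anti 0 k (Nat.zero_le _)) hcol)
  have hndC : (rowList Y A C).Nodup := by
    refine nodup_rowList Y A C ?_
    intro k l k' l' h1 h2 hne hPairEq
    exact hC.2.2.1 k l k' l' h1 h2 hne (congrArg Prod.fst hPairEq)
      (congrArg Prod.snd hPairEq)
  have hndD : (rowList Y A (fun _ l => l)).Nodup := by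
    refine nodup_rowList Y A (fun _ l => l) ?_
    intro k l k' l' h1 h2 hne hPairEq
    have hll : l = l' := congrArg Prod.snd hPairEq
    subst hll
    have hkk : k ≠ k' := fun h => hne (by rw [h])
    have hA' : A k l = A k' l := congrArg Prod.fst hPairEq
    rcases lt_or_gt_of_ne hkk with h | h
    · exact absurd hA' (Nat.ne_of_lt (hA.2 k k' l h2 h))
    · exact absurd hA'.symm (Nat.ne_of_lt (hA.2 k' k l h1 h))
  -- a linear functional not vanishing on `e_C`
  have hx : eTab p Y C ≠ 0 := by
    have hu : IsUnit (eTab p Y C) :=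
      isUnit_eTab p Y C (fun k l hm' => hC.2.1 (k, l) ((YoungDiagram.mem_cells _).mpr hm'))
    exact hu.ne_zero
  have hgex : ¬ ∀ φ : Module.Dual ℂ (Cl p), φ (eTab p Y C) = 0 := by
    rw [Module.forall_dual_apply_eq_zero_iff]
    exact hx
  push_neg at hgex
  obtain ⟨g, hg⟩ := hgex
  -- apply `id ⊗ g` to the hypothesis
  set F : Bsp m p →ₗ[ℂ] Lam m p :=
    (TensorProduct.rid ℂ (Lam m p)).toLinearMap ∘ₗ LinearMap.lTensor (Lam m p) g with hF
  have hFtmul : ∀ (a : Lam m p) (b : Cl p), F (a ⊗ₜ[ℂ] b) = g b • a := by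
    intro a b
    simp [hF, TensorProduct.rid_tmul]
  have hFheq := congrArg F heq
  rw [map_smul, hFtmul, hFtmul] at hFheq
  obtain ⟨c, huv⟩ : ∃ c : ℂ,
      thetaTab m p Y A C = c • thetaTab m p Y A (fun _ l => l) := by
    refine ⟨(g (eTab p Y C))⁻¹ * (ε * g (eTab p Y (fun _ l => l))), ?_⟩
    have h1 := congrArg (fun z => (g (eTab p Y C))⁻¹ • z) hFheq
    simp only [smul_smul] at h1
    rw [inv_mul_cancel₀ hg, one_smul] at h1
    exact h1
  rw [thetaTab_eq_monN m p Y A C, thetaTab_eq_monN m p Y A (fun _ l => l)] at huv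
  have hone : (1 : Lam m p) ≠ 0 := one_ne_zero
  have hcmul : conN m p (rowList Y A C) (monN m p (rowList Y A C)) = 1 :=
    conN_monN_self m p _ hLC hndC
  have hc0 : c ≠ 0 := by
    intro h
    rw [h, zero_smul] at huv
    rw [huv, map_zero] at hcmul
    exact hone hcmul.symm
  have hvd : monN m p (rowList Y A (fun _ l => l))
      = c⁻¹ • monN m p (rowList Y A C) := by
    rw [huv, smul_smul, inv_mul_cancel₀ hc0, one_smul]
  have hsub : ∀ q ∈ rowList Y A (fun _ l => l), q ∈ rowList Y A C := by
    intro q hqD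
    by_contra hqC
    have h1 : conN m p (rowList Y A (fun _ l => l))
        (monN m p (rowList Y A (fun _ l => l))) = 1 :=
      conN_monN_self m p _ hLD hndD
    rw [hvd, map_smul, conN_monN_ne m p _ _ hLD hLC hqD hqC, smul_zero] at h1
    exact hone h1.symm
  have h2 : ∀ k l, (k, l) ∈ Y →
      ∃ k' l', (k', l') ∈ Y ∧ A k' l' = A k l ∧ C k' l' = l := by
    intro k l hmem
    have hq : ((A k l, l) : ℕ × ℕ) ∈ rowList Y A (fun _ l => l) :=
      mem_rowList.mpr ⟨k, l, hmem, rfl⟩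
    obtain ⟨k', l', hmem', hEq⟩ := mem_rowList.mp (hsub _ hq)
    exact ⟨k', l', hmem', (congrArg Prod.fst hEq).symm, (congrArg Prod.snd hEq).symm⟩
  exact combinatorial_step p Y A C hA hC h2

end
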